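/- Let T : ℝ → ℝ be defined by T(x) = x/(1-x) if x ≤ 1/2 and T(x) = (2x-1)/x if x > 1/2. If x ∈ (0,1) is a quadratic irrational (irrational and a root of a quadratic polynomial with integer coefficients), then the orbit of x under T is eventually periodic: there exist k ≥ 0 and m ≥ 1 such that T^[k+m](x) = T^[k](x). -/

import Mathlib

noncomputable def T : ℝ → ℝ := fun x => if x ≤ 1/2 then x / (1 - x) else (2*x - 1) / x

namespace Stmt6Aux

lemma T_left {x : ℝ} (h : x ≤ 1/2) : T x = x / (1 - x) := if_pos h

lemma T_right {x : ℝ} (h : ¬ x ≤ 1/2) : T x = 2 - 1/x := by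
  have hx : x ≠ 0 := by intro h0; subst h0; norm_num at h
  show (if x ≤ 1/2 then x / (1 - x) else (2*x - 1) / x) = 2 - 1/x
  rw [if_neg h]; field_simp

lemma T_inv {x : ℝ} (hx : x ∈ Set.Ioo (0:ℝ) 1) (hirr : Irrational x) :
    T x ∈ Set.Ioo (0:ℝ) 1 ∧ Irrational (T x) := by
  obtain ⟨hx0, hx1⟩ := hx
  by_cases h : x ≤ 1/2
  · have hlt : x < 1/2 := lt_of_le_of_ne h (by
      intro he; exact hirr ⟨1/2, by rw [he]; norm_num⟩)
    have h1x : (0:ℝ) < 1 - x := by linarith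
    rw [T_left h]
    constructor
    · constructor
      · positivity
      · rw [div_lt_one h1x]; linarith
    · intro ⟨q, hq⟩
      apply hirr
      refine ⟨q / (1 + q), ?_⟩
      have h1q : (1:ℝ) + (q:ℝ) ≠ 0 := by
        have : x / (1-x) > 0 := by positivity
        rw [← hq] at *
        intro h0
        nlinarith
      push_cast
      rw [hq] at h1q ⊢
      field_simp; ring
  · push_neg at h
    rw [T_right (not_le.mpr h)]
    have hx0' : x ≠ 0 := ne_of_gt hx0
    constructor
    · constructor
      · have : 1/x < 2 := by rw [div_lt_iff₀ hx0]; linarith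
        linarith
      · have : 1 < 1/x := by rw [lt_div_iff₀ hx0]; linarith
        linarith
    · intro ⟨q, hq⟩
      apply hirr
      refine ⟨1 / (2 - q), ?_⟩
      have h2q : (2:ℝ) - (q:ℝ) ≠ 0 := by
        rw [hq]; intro h0
        have : 1/x = 0 := by linarith
        simp [hx0'] at this
      push_cast
      rw [hq] at h2q ⊢
      field_simp; ring

lemma iter_inv {x : ℝ} (hx : x ∈ Set.Ioo (0:ℝ) 1) (hirr : Irrational x) (j : ℕ) :
    T^[j] x ∈ Set.Ioo (0:ℝ) 1 ∧ Irrational (T^[j] x) := by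
  induction j with
  | zero => exact ⟨hx, hirr⟩
  | succ n ih =>
    rw [Function.iterate_succ_apply']
    exact T_inv ih.1 ih.2

lemma escape {x : ℝ} (hx : x ∈ Set.Ioo (0:ℝ) 1) (hirr : Irrational x) :
    ∃ j : ℕ, 1/2 < T^[j] x := by
  by_contra hc
  push_neg at hc
  have hx0 := hx.1
  have grow : ∀ j : ℕ, x + j * x^2 ≤ T^[j] x := by
    intro j
    induction j with
    | zero => simp
    | succ n ih =>
      rw [Function.iterate_succ_apply']
      have hy := (iter_inv hx hirr n).1
      have hy2 := hc n
      rw [T_left hy2]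
      set y := T^[n] x with hyd
      have h1y : (0:ℝ) < 1 - y := by linarith [hy.2]
      have key : y + y^2 ≤ y / (1 - y) := by
        rw [le_div_iff₀ h1y]; nlinarith [hy.1]
      have hxy : x ≤ y := by nlinarith [ih, hy.1]
      push_cast
      nlinarith [ih, hy.1]
  obtain ⟨j, hj⟩ := exists_nat_gt ((1:ℝ)/(2*x^2))
  have := grow j
  have := hc j
  have hx2 : (0:ℝ) < x^2 := by positivity
  have h1 : (1:ℝ)/(2*x^2) * x^2 < j * x^2 :=
    mul_lt_mul_of_pos_right hj hx2
  have h2 : (1:ℝ)/(2*x^2) * x^2 = 1/2 := by field_simp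
  nlinarith [hc j, grow j]


lemma jump {z : ℝ} (hz : z ∈ Set.Ioo (0:ℝ) 1) (hirr : Irrational z) :
    ∃ j n : ℕ, 1 ≤ j ∧ 2 ≤ n ∧ T^[j] z = (n:ℝ) - 1/z := by
  have hz0 := hz.1
  have hesc := escape hz hirr
  set j0 := Nat.find hesc with hj0
  have hfind : 1/2 < T^[j0] z := Nat.find_spec hesc
  have hmin : ∀ i < j0, ¬ (1/2 < T^[i] z) := fun i hi => Nat.find_min hesc hi
  -- closed form on the prefix
  have pre : ∀ i ≤ j0, T^[i] z = z / (1 - i * z) ∧ 0 < 1 - i * z := by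
    intro i hi
    induction i with
    | zero => simp
    | succ m ih =>
      have hm : m ≤ j0 := le_of_lt (Nat.lt_of_succ_le hi)
      obtain ⟨hform, hpos⟩ := ih hm
      have hle : T^[m] z ≤ 1/2 := le_of_not_gt (hmin m (Nat.lt_of_succ_le hi))
      have hmem := (iter_inv hz hirr m).1
      have hnext_pos : 0 < 1 - (m+1 : ℕ) * z := by
        have h1 : 1 - ((m:ℝ)+1) * z = (1 - m*z) * (1 - T^[m] z) := by
          rw [hform]; field_simp; ring_nf
        push_cast
        rw [h1]
        exact mul_pos hpos (by linarith)
      refine ⟨?_, hnext_pos⟩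
      rw [Function.iterate_succ_apply', T_left hle]
      have hne : (1:ℝ) - m*z ≠ 0 := ne_of_gt hpos
      have hne2 : (1:ℝ) - ((m:ℝ)+1)*z ≠ 0 := by push_cast at hnext_pos ⊢; linarith
      have hY1 : (1:ℝ) - T^[m] z ≠ 0 := by linarith
      push_cast
      rw [div_eq_div_iff hY1 hne2, hform]
      have hne' : (1:ℝ) - z*m ≠ 0 := by rw [mul_comm]; exact hne
      field_simp
      try ring
      try tauto
  obtain ⟨hform, hpos⟩ := pre j0 le_rfl
  have hmem := (iter_inv hz hirr j0).1
  refine ⟨j0 + 1, j0 + 2, by omega, by omega, ?_⟩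
  rw [Function.iterate_succ_apply', T_right (not_le.mpr hfind), hform]
  have hne : (1:ℝ) - j0*z ≠ 0 := ne_of_gt hpos
  have hz0' : z ≠ 0 := ne_of_gt hz0
  push_cast
  field_simp
  ring

lemma form_step (a b c : ℤ) (n : ℕ) (y : ℝ) (hy : y ≠ 0)
    (hf : (a:ℝ) * y^2 + b * y + c = 0) :
    ((c:ℤ):ℝ) * ((n:ℝ) - 1/y)^2 + ((-(b + 2*c*n):ℤ):ℝ) * ((n:ℝ) - 1/y)
      + (((a + b*n + c*n^2:ℤ)):ℝ) = 0 := by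
  push_cast
  field_simp
  linear_combination hf

lemma conj_step (a b c : ℤ) (n : ℕ) (z : ℝ) (ha : (a:ℝ) ≠ 0) (hc : (c:ℝ) ≠ 0)
    (hz : z ≠ 0) (hw : -(b:ℝ)/a - z ≠ 0)
    (hf : (a:ℝ) * z^2 + b * z + c = 0) :
    -((-(b + 2*c*n):ℤ):ℝ)/((c:ℤ):ℝ) - ((n:ℝ) - 1/z) = (n:ℝ) - 1/(-(b:ℝ)/a - z) := by
  have hw' : -(b:ℝ) - a*z ≠ 0 := by
    intro h0
    apply hw
    field_simp
    linarith
  have hw'' : -(b:ℝ) - z*a ≠ 0 := by rw [mul_comm]; exact hw'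
  push_cast
  field_simp
  linear_combination (-(b:ℝ)) * hf

lemma eventually_one_lt (Z W : ℕ → ℝ)
    (hZ : ∀ k, Z k ∈ Set.Ioo (0:ℝ) 1)
    (hW0 : ∀ k, W k ≠ 0) (hW1 : ∀ k, W k ≠ 1) (hne : ∀ k, Z k ≠ W k)
    (hrec : ∀ k, ∃ n : ℕ, 2 ≤ n ∧ Z (k+1) = (n:ℝ) - 1/(Z k) ∧ W (k+1) = (n:ℝ) - 1/(W k)) :
    ∀ K, ∃ K', K ≤ K' ∧ ∀ j, K' ≤ j → 1 < W j := by
  -- step 1: once above 1, stays above 1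
  have stay : ∀ k, 1 < W k → 1 < W (k+1) := by
    intro k hk
    obtain ⟨n, hn2, _, hWr⟩ := hrec k
    have : 1/(W k) < 1 := by
      rw [div_lt_one (by linarith)]; linarith
    have hn2' : (2:ℝ) ≤ n := by exact_mod_cast hn2
    rw [hWr]; linarith
  have stay' : ∀ k j, 1 < W k → k ≤ j → 1 < W j := by
    intro k j hk hkj
    induction j with
    | zero => have : k = 0 := by omega
              subst this; exact hk
    | succ m ih =>
      rcases Nat.lt_or_ge k (m+1) with h | h
      · exact stay m (ih (by omega))
      · have : k = m + 1 := by omega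
        subst this; exact hk
  -- step 2: suffices to find one index ≥ K with 1 < W
  suffices h : ∀ K, ∃ K', K ≤ K' ∧ 1 < W K' by
    intro K
    obtain ⟨K', hKK', hK'⟩ := h K
    exact ⟨K', hKK', fun j hj => stay' K' j hK' hj⟩
  intro K
  by_contra hcon
  push_neg at hcon
  -- so for all j ≥ K, W j ≤ 1, hence W j < 1
  have hlt1 : ∀ j, K ≤ j → W j < 1 := fun j hj =>
    lt_of_le_of_ne (hcon j hj) (hW1 j)
  -- also W j > 0 for all j ≥ K
  have hpos : ∀ j, K ≤ j → 0 < W j := by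
    intro j hj
    by_contra h0
    push_neg at h0
    have hneg : W j < 0 := lt_of_le_of_ne h0 (hW0 j)
    obtain ⟨n, hn2, _, hWr⟩ := hrec j
    have hn2' : (2:ℝ) ≤ n := by exact_mod_cast hn2
    have : 1/(W j) < 0 := by
      apply div_neg_of_pos_of_neg one_pos hneg
    have : 1 < W (j+1) := by rw [hWr]; linarith
    exact absurd this (not_lt.mpr (hcon (j+1) (by omega)))
  -- distance argument
  set d : ℕ → ℝ := fun j => |Z (K+j) - W (K+j)| with hd
  have hd0 : ∀ j, 0 < d j := by
    intro j
    exact abs_pos.mpr (sub_ne_zero.mpr (hne (K+j)))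
  have hdlt : ∀ j, d j < 1 := by
    intro j
    have h1 := hZ (K+j)
    have h2 := hpos (K+j) (by omega)
    have h3 := hlt1 (K+j) (by omega)
    rw [hd]; simp only
    rw [abs_sub_lt_iff]
    constructor <;> linarith [h1.1, h1.2]
  have hkey : ∀ j, 1/(d (j+1)) ≤ 1/(d j) - 1 := by
    intro j
    obtain ⟨n, hn2, hZr, hWr⟩ := hrec (K+j)
    have hz := hZ (K+j)
    have hw0 := hpos (K+j) (by omega)
    have hw1 := hlt1 (K+j) (by omega)
    have hzne : Z (K+j) ≠ 0 := ne_of_gt hz.1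
    have hwne : W (K+j) ≠ 0 := hW0 _
    have hdiff : Z (K+j+1) - W (K+j+1) = (Z (K+j) - W (K+j)) / (Z (K+j) * W (K+j)) := by
      rw [show K+j+1 = (K+j)+1 from rfl, hZr, hWr]
      field_simp
      ring
    have hdrec : d (j+1) = d j / (Z (K+j) * W (K+j)) := by
      rw [hd]; simp only
      rw [show K+(j+1) = (K+j)+1 from rfl, hdiff, abs_div,
        abs_of_pos (mul_pos hz.1 hw0)]
    have hprod : Z (K+j) * W (K+j) ≤ 1 - d j := by
      rcases le_total (Z (K+j)) (W (K+j)) with h | h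
      · have : d j = W (K+j) - Z (K+j) := by
          rw [hd]; simp only; rw [abs_of_nonpos (by linarith)]; ring
        nlinarith [hz.1, hz.2, hw0, hw1]
      · have : d j = Z (K+j) - W (K+j) := by
          rw [hd]; simp only; rw [abs_of_nonneg (by linarith)]
        nlinarith [hz.1, hz.2, hw0, hw1]
    rw [hdrec]
    rw [one_div_div]
    rw [div_le_iff₀ (hd0 j)]
    have := hd0 j
    have := hdlt j
    field_simp
    nlinarith
  have hiter : ∀ j, 1/(d j) ≤ 1/(d 0) - j := by
    intro j
    induction j with
    | zero => simp
    | succ m ih =>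
      have := hkey m
      push_cast
      linarith
  obtain ⟨j, hj⟩ := exists_nat_gt (1/(d 0))
  have h1 := hiter j
  have h2 : 0 < 1/(d j) := by
    have := hd0 j; positivity
  linarith

lemma triple_bounds (a b c D : ℤ) (z w : ℝ) (ha : 0 < a) (hz0 : 0 < z) (hz1 : z < 1)
    (hw : 1 < w) (hD : D = b^2 - 4*a*c)
    (hf : (a:ℝ)*z^2 + (b:ℝ)*z + (c:ℝ) = 0) (hsum : w = -(b:ℝ)/a - z) :
    1 ≤ a ∧ a ≤ D ∧ 1 ≤ c ∧ c ≤ D ∧ -2*D ≤ b ∧ b ≤ 2*D := by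
  have haR : (0:ℝ) < a := by exact_mod_cast ha
  have hbR : (b:ℝ) = -a*(z+w) := by
    rw [hsum]; field_simp; ring
  have hcR : (c:ℝ) = a*z*w := by
    linear_combination hf - z * hbR
  -- c > 0
  have hcpos : (0:ℝ) < c := by rw [hcR]; positivity
  have hc1 : 1 ≤ c := by exact_mod_cast Int.add_one_le_of_lt (by exact_mod_cast hcpos : (0:ℤ) < c)
  -- a + b + c < 0
  have habc : (a:ℝ) + b + c < 0 := by
    have : (a:ℝ) + b + c = a*(1-z)*(1-w) := by
      rw [hbR, hcR]; ring
    rw [this]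
    have h1 : (0:ℝ) < 1 - z := by linarith
    have h2 : (1:ℝ) - w < 0 := by linarith
    exact mul_neg_of_pos_of_neg (mul_pos haR h1) h2
  have habcZ : a + b + c ≤ -1 := by
    have : (((a + b + c : ℤ)):ℝ) < 0 := by push_cast; linarith
    have := (by exact_mod_cast this : (a+b+c : ℤ) < 0)
    omega
  -- u := -(a+b+c) ≥ 1, v := a + c - b ≥ 2(a+c)+1, u*v = D - (a-c)^2
  have hu : 1 ≤ -(a+b+c) := by omega
  have hv : 2*(a+c)+1 ≤ a + c - b := by omega
  have huv : (-(a+b+c)) * (a+c-b) = D - (a-c)^2 := by rw [hD]; ring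
  have hvpos : 0 < a + c - b := by omega
  have hvle : a + c - b ≤ D - (a-c)^2 := by nlinarith
  have hacD : 2*(a+c)+1 ≤ D := by nlinarith [sq_nonneg (a-c)]
  refine ⟨ha, by omega, hc1, by omega, ?_, ?_⟩
  · -- b ≥ -2D : -b = (a+c-b) - (a+c) ≤ D - (a+c) ≤ D ... need -b ≤ 2D
    nlinarith [sq_nonneg (a-c)]
  · -- b ≤ 2D : b is negative anyway
    have hbneg : b ≤ -(a+c)-1 := by omega
    have hDpos : 0 < D := by omega
    omega

structure St where
  N : ℕ
  a : ℤ
  b : ℤ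
  c : ℤ

def GoodSt (x : ℝ) (s : St) : Prop :=
  s.a ≠ 0 ∧ (s.a:ℝ) * (T^[s.N] x)^2 + (s.b:ℝ) * (T^[s.N] x) + (s.c:ℝ) = 0

def LinkSt (x : ℝ) (s s' : St) : Prop :=
  ∃ n : ℕ, 2 ≤ n ∧ s.N < s'.N ∧ s'.a = s.c ∧ s'.b = -(s.b + 2*s.c*(n:ℤ)) ∧
    s'.c = s.a + s.b*(n:ℤ) + s.c*(n:ℤ)^2 ∧ T^[s'.N] x = (n:ℝ) - 1/(T^[s.N] x)

lemma step_exists {x : ℝ} (hx : x ∈ Set.Ioo (0:ℝ) 1) (hirr : Irrational x)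
    (s : St) (hs : GoodSt x s) : ∃ s', GoodSt x s' ∧ LinkSt x s s' := by
  obtain ⟨ha, hf⟩ := hs
  set z := T^[s.N] x with hzdef
  have hzm := (iter_inv hx hirr s.N).1
  have hzi := (iter_inv hx hirr s.N).2
  obtain ⟨j, n, hj1, hn2, hjn⟩ := jump hzm hzi
  have hzne : z ≠ 0 := ne_of_gt hzm.1
  have haR : (s.a:ℝ) ≠ 0 := Int.cast_ne_zero.mpr ha
  have hc0 : s.c ≠ 0 := by
    intro h0
    rw [h0] at hf
    push_cast at hf
    have h2 : (s.a:ℝ)*z + s.b = 0 := by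
      rcases mul_eq_zero.mp (show ((s.a:ℝ)*z + s.b)*z = 0 by linear_combination hf)
        with h | h
      · exact h
      · exact absurd h hzne
    exact hzi ⟨-(s.b:ℚ)/(s.a:ℚ), by push_cast; field_simp; linarith⟩
  refine ⟨⟨s.N + j, s.c, -(s.b + 2*s.c*(n:ℤ)), s.a + s.b*(n:ℤ) + s.c*(n:ℤ)^2⟩,
    ⟨hc0, ?_⟩, n, hn2, show s.N < s.N + j by omega, rfl, rfl, rfl, ?_⟩
  · show (s.c:ℝ) * (T^[s.N + j] x)^2
      + ((-(s.b + 2*s.c*(n:ℤ)):ℤ):ℝ) * (T^[s.N + j] x)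
      + (((s.a + s.b*(n:ℤ) + s.c*(n:ℤ)^2 : ℤ)):ℝ) = 0
    have hT : T^[s.N + j] x = (n:ℝ) - 1/z := by
      rw [add_comm, Function.iterate_add_apply]; exact hjn
    rw [hT]
    exact_mod_cast form_step s.a s.b s.c n z hzne hf
  · show T^[s.N + j] x = (n:ℝ) - 1/z
    rw [add_comm, Function.iterate_add_apply]; exact hjn


lemma normalize_triple (a b c : ℤ) (z w : ℝ) (ha : a ≠ 0)
    (hf : (a:ℝ)*z^2 + (b:ℝ)*z + (c:ℝ) = 0) (hw : w = -(b:ℝ)/a - z) :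
    ∃ a' b' c' : ℤ, 0 < a' ∧
      (if 0 < a then ((a,b,c) : ℤ×ℤ×ℤ) else (-a,-b,-c)) = (a',b',c') ∧
      (a':ℝ)*z^2 + (b':ℝ)*z + (c':ℝ) = 0 ∧ w = -(b':ℝ)/a' - z ∧
      b'^2 - 4*a'*c' = b^2 - 4*a*c := by
  rcases lt_or_gt_of_ne ha with hneg | hpos
  · refine ⟨-a, -b, -c, by omega, by rw [if_neg (by omega)], ?_, ?_, by ring⟩
    · push_cast; linarith
    · rw [hw]; push_cast; ring
  · exact ⟨a, b, c, hpos, by rw [if_pos hpos], hf, hw, by ring⟩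

end Stmt6Aux

open Stmt6Aux

theorem stmt6 (x : ℝ) (hx : x ∈ Set.Ioo (0:ℝ) 1) (hirr : Irrational x)
    (hquad : ∃ a b c : ℤ, a ≠ 0 ∧ (a : ℝ) * x^2 + (b : ℝ) * x + (c : ℝ) = 0) :
    ∃ k m : ℕ, 1 ≤ m ∧ T^[k + m] x = T^[k] x := by
  classical
  obtain ⟨a0, b0, c0, ha0, hf0⟩ := hquad
  have hg0 : GoodSt x ⟨0, a0, b0, c0⟩ := ⟨ha0, by simpa using hf0⟩
  choose f hgood hlink using fun (p : {s : St // GoodSt x s}) =>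
    step_exists hx hirr p.1 p.2
  let seq : ℕ → {s : St // GoodSt x s} := fun k =>
    Nat.rec ⟨⟨0, a0, b0, c0⟩, hg0⟩ (fun _ p => ⟨f p, hgood p⟩) k
  have hseq : ∀ k, LinkSt x (seq k).1 (seq (k+1)).1 := fun k => hlink (seq k)
  set NN : ℕ → ℕ := fun k => (seq k).1.N with hNN
  set A : ℕ → ℤ := fun k => (seq k).1.a with hA
  set B : ℕ → ℤ := fun k => (seq k).1.b with hB
  set C : ℕ → ℤ := fun k => (seq k).1.c with hC
  set Z : ℕ → ℝ := fun k => T^[NN k] x with hZ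
  set W : ℕ → ℝ := fun k => -(B k:ℝ)/(A k:ℝ) - Z k with hW
  have hZm : ∀ k, Z k ∈ Set.Ioo (0:ℝ) 1 := fun k => (iter_inv hx hirr (NN k)).1
  have hZi : ∀ k, Irrational (Z k) := fun k => (iter_inv hx hirr (NN k)).2
  have hAne : ∀ k, A k ≠ 0 := fun k => (seq k).2.1
  have hAneR : ∀ k, (A k:ℝ) ≠ 0 := fun k => Int.cast_ne_zero.mpr (hAne k)
  have hform : ∀ k, (A k:ℝ) * (Z k)^2 + (B k:ℝ) * (Z k) + (C k:ℝ) = 0 :=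
    fun k => (seq k).2.2
  -- conjugate irrational
  have hWirr : ∀ k, Irrational (W k) := by
    intro k
    have : W k = ((-(B k) / (A k) : ℚ):ℝ) - Z k := by
      rw [hW]; push_cast; ring
    rw [this]
    exact (hZi k).ratCast_sub _
  have hW0 : ∀ k, W k ≠ 0 := fun k => (hWirr k).ne_zero
  have hW1 : ∀ k, W k ≠ 1 := fun k => (hWirr k).ne_one
  have hneZW : ∀ k, Z k ≠ W k := by
    intro k heq
    apply hZi k
    refine ⟨-(B k)/(2*(A k)), ?_⟩
    have h2 : 2 * Z k = -(B k:ℝ)/(A k) := by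
      rw [hW] at heq; linarith [heq]
    push_cast
    have hA' := hAneR k
    field_simp at h2 ⊢
    linarith
  -- D invariant
  set D0 : ℤ := b0^2 - 4*a0*c0 with hD0
  have hDinv : ∀ k, (B k)^2 - 4*(A k)*(C k) = D0 := by
    intro k
    induction k with
    | zero => rfl
    | succ m ih =>
      obtain ⟨n, hn2, hNlt, ha', hb', hc', hT⟩ := hseq m
      show (B (m+1))^2 - 4*(A (m+1))*(C (m+1)) = D0
      have eA : A (m+1) = C m := ha'
      have eB : B (m+1) = -(B m + 2*(C m)*(n:ℤ)) := hb'
      have eC : C (m+1) = A m + (B m)*(n:ℤ) + (C m)*(n:ℤ)^2 := hc'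
      rw [eA, eB, eC, ← ih]
      ring
  -- strict monotonicity of times
  have hNmono : StrictMono NN := by
    apply strictMono_nat_of_lt_succ
    intro k
    exact (hseq k).choose_spec.2.1
  -- recurrence for Z and W
  have hrec : ∀ k, ∃ n : ℕ, 2 ≤ n ∧ Z (k+1) = (n:ℝ) - 1/(Z k) ∧
      W (k+1) = (n:ℝ) - 1/(W k) := by
    intro k
    obtain ⟨n, hn2, hNlt, ha', hb', hc', hT⟩ := hseq k
    refine ⟨n, hn2, hT, ?_⟩
    have hCne : (C k:ℝ) ≠ 0 := by
      have : A (k+1) = C k := ha'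
      rw [← this]; exact hAneR (k+1)
    have hWne : -(B k:ℝ)/(A k:ℝ) - Z k ≠ 0 := hW0 k
    have := conj_step (A k) (B k) (C k) n (Z k) (hAneR k) hCne
      (ne_of_gt (hZm k).1) hWne (hform k)
    have eA : A (k+1) = C k := ha'
    have eB : B (k+1) = -(B k + 2*(C k)*(n:ℤ)) := hb'
    have eT : Z (k+1) = (n:ℝ) - 1/(Z k) := hT
    calc W (k+1) = -(B (k+1):ℝ)/(A (k+1):ℝ) - Z (k+1) := rfl
      _ = -((-(B k + 2*(C k)*(n:ℤ)):ℤ):ℝ)/((C k:ℤ):ℝ) - ((n:ℝ) - 1/(Z k)) := by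
          rw [eA, eB, eT]
      _ = (n:ℝ) - 1/(W k) := this
  -- conjugate eventually > 1
  obtain ⟨K, -, hK⟩ := eventually_one_lt Z W hZm hW0 hW1 hneZW hrec 0
  -- normalized triples with bounds
  set g : ℕ → ℤ×ℤ×ℤ := fun i =>
    if 0 < A (K+i) then (A (K+i), B (K+i), C (K+i))
    else (-(A (K+i)), -(B (K+i)), -(C (K+i))) with hg
  set F : Finset (ℤ×ℤ×ℤ) := Finset.Icc (1, -2*D0, 1) (D0, 2*D0, D0) with hF
  have hmaps : ∀ i, g i ∈ F := by
    intro i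
    obtain ⟨a', b', c', hpos, heq, hf', hw', hd'⟩ :=
      normalize_triple (A (K+i)) (B (K+i)) (C (K+i)) (Z (K+i)) (W (K+i))
        (hAne _) (hform _) rfl
    have hWgt : 1 < W (K+i) := hK (K+i) (by omega)
    have hbds := triple_bounds a' b' c' D0 (Z (K+i)) (W (K+i)) hpos
      (hZm _).1 (hZm _).2 hWgt (by rw [hd', hDinv]) hf' hw'
    have hgi : g i = (a', b', c') := heq
    rw [hgi, hF, Finset.mem_Icc]
    obtain ⟨h1, h2, h3, h4, h5, h6⟩ := hbds
    exact ⟨Prod.mk_le_mk.mpr ⟨h1, Prod.mk_le_mk.mpr ⟨h5, h3⟩⟩,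
      Prod.mk_le_mk.mpr ⟨h2, Prod.mk_le_mk.mpr ⟨h6, h4⟩⟩⟩
  -- pigeonhole
  obtain ⟨i, hi, j, hj, hij, hgij⟩ :=
    Finset.exists_ne_map_eq_of_card_lt_of_maps_to
      (s := Finset.range (F.card + 1)) (by simp) (fun i _ => hmaps i)
  -- shared conclusion for ordered pair
  have main : ∀ p q : ℕ, p < q → g p = g q →
      ∃ k m : ℕ, 1 ≤ m ∧ T^[k + m] x = T^[k] x := by
    intro p q hlt hgpq
    obtain ⟨a', b', c', hpos, heqi, hfi, hwi, -⟩ :=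
      normalize_triple (A (K+p)) (B (K+p)) (C (K+p)) (Z (K+p)) (W (K+p))
        (hAne _) (hform _) rfl
    obtain ⟨a2, b2, c2, hpos2, heqj, hfj, hwj, -⟩ :=
      normalize_triple (A (K+q)) (B (K+q)) (C (K+q)) (Z (K+q)) (W (K+q))
        (hAne _) (hform _) rfl
    have hgi : g p = (a', b', c') := heqi
    have hgj : g q = (a2, b2, c2) := heqj
    have htrip : ((a', b', c') : ℤ×ℤ×ℤ) = (a2, b2, c2) := by
      rw [← hgi, ← hgj, hgpq]
    have ha2 : a' = a2 := congrArg Prod.fst htrip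
    have hb2 : b' = b2 := congrArg (fun t => t.2.1) htrip
    have hc2 : c' = c2 := congrArg (fun t => t.2.2) htrip
    have hZeq : Z (K+p) = Z (K+q) := by
      by_contra hne
      have hfj' : (a':ℝ)*(Z (K+q))^2 + (b':ℝ)*(Z (K+q)) + (c':ℝ) = 0 := by
        rw [ha2, hb2, hc2]; exact hfj
      have hfact : (Z (K+q) - Z (K+p)) * ((a':ℝ)*(Z (K+q) + Z (K+p)) + b') = 0 := by
        linear_combination hfj' - hfi
      rcases mul_eq_zero.mp hfact with h | h
      · exact hne (sub_eq_zero.mp h).symm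
      · have haR : (a':ℝ) ≠ 0 := Int.cast_ne_zero.mpr (by omega)
        have hZW : Z (K+q) = W (K+p) := by
          rw [hwi]
          field_simp
          linarith
        have h1 := hK (K+p) (by omega)
        have h2 := (hZm (K+q)).2
        rw [hZW] at h2
        linarith
    have hNij : NN (K+p) < NN (K+q) := hNmono (by omega)
    refine ⟨NN (K+p), NN (K+q) - NN (K+p), by omega, ?_⟩
    rw [Nat.add_sub_cancel' (le_of_lt hNij)]
    exact hZeq.symm
  rcases hij.lt_or_gt with hlt | hlt
  · exact main i j hlt hgij
  · exact main j i hlt hgij.symm
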